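/- arXiv:2011.04291 — 3 statements merged into one kernel-verified Lean document; each statement's English description precedes it below -/
import Mathlib

section
/- There exists a unique formal power series C(x) over ℚ with C(0) = 0 and [x¹]C = 1 satisfying the Riccati-type differential equation 2x·C(x)·C'(x) = C(x)·(1 + C(x)) − x. -/
open PowerSeries Finset

namespace Stmt2Aux

noncomputable def c : ℕ → ℚ
  | 0 => 0
  | 1 => 1
  | n + 2 => (n + 1) * ∑ j ∈ (Finset.range (n + 1)).attach, c (j.1 + 1) * c (n + 1 - j.1)
decreasing_by
  · have := j.2; rw [Finset.mem_range] at this; omega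
  · omega

lemma sym (a : ℕ → ℚ) (n : ℕ) :
    2 * ∑ k ∈ Finset.range (n + 2), ((n + 1 - k : ℕ) : ℚ) * (a k * a (n + 1 - k)) =
      ((n : ℚ) + 1) * ∑ k ∈ Finset.range (n + 2), a k * a (n + 1 - k) := by
  rw [two_mul, Finset.mul_sum]
  nth_rewrite 1 [← Finset.sum_range_reflect]
  rw [← Finset.sum_add_distrib]
  apply Finset.sum_congr rfl
  intro k hk
  rw [Finset.mem_range] at hk
  have h2 : n + 2 - 1 - k = n + 1 - k := by omega
  have h1 : n + 1 - (n + 1 - k) = k := by omega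
  rw [h2, h1]
  have hc : ((n + 1 - k : ℕ) : ℚ) = (n : ℚ) + 1 - k := by
    push_cast [Nat.cast_sub (by omega : k ≤ n + 1)]; ring
  rw [hc]
  ring

lemma coeff_L (f : ℚ⟦X⟧) (n : ℕ) :
    coeff (n + 1) (2 * X * f * (d⁄dX ℚ f)) =
      ((n : ℚ) + 1) * ∑ k ∈ Finset.range (n + 2), coeff k f * coeff (n + 1 - k) f := by
  set a : ℕ → ℚ := fun k => coeff k f with ha
  have h : 2 * X * f * (d⁄dX ℚ f) = X * (f * d⁄dX ℚ f + f * d⁄dX ℚ f) := by ring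
  rw [h, coeff_succ_X_mul, map_add, coeff_mul,
    Finset.Nat.sum_antidiagonal_eq_sum_range_succ_mk]
  have e1 : ∑ k ∈ Finset.range (n + 2), ((n + 1 - k : ℕ) : ℚ) * (a k * a (n + 1 - k))
      = ∑ k ∈ Finset.range (n + 1), a k * coeff (n - k) (d⁄dX ℚ f) := by
    rw [Finset.sum_range_succ, show n + 1 - (n + 1) = 0 from Nat.sub_self _, Nat.cast_zero,
      zero_mul, add_zero]
    apply Finset.sum_congr rfl
    intro k hk
    rw [Finset.mem_range] at hk
    rw [coeff_derivative]
    rw [show n + 1 - k = (n - k) + 1 from by omega]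
    push_cast
    ring
  rw [← e1, ← two_mul, sym]

lemma coeff_R (f : ℚ⟦X⟧) (n : ℕ) :
    coeff (n + 1) (f * (1 + f) - X) =
      coeff (n + 1) f + (∑ k ∈ Finset.range (n + 2), coeff k f * coeff (n + 1 - k) f)
        - (if n = 0 then 1 else 0) := by
  rw [map_sub, coeff_X, mul_add, mul_one, map_add, coeff_mul,
    Finset.Nat.sum_antidiagonal_eq_sum_range_succ_mk]
  have hif : (n + 1 = 1) ↔ (n = 0) := by omega
  rw [if_congr hif rfl rfl]

lemma eq_iff (f : ℚ⟦X⟧) (h0 : constantCoeff f = 0) :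
    2 * X * f * (d⁄dX ℚ f) = f * (1 + f) - X ↔
    ∀ n : ℕ, coeff (n + 1) f = (if n = 0 then 1 else 0)
      + n * ∑ k ∈ Finset.range (n + 2), coeff k f * coeff (n + 1 - k) f := by
  constructor
  · intro h n
    have h2 := congrArg (coeff (n + 1)) h
    rw [coeff_L, coeff_R] at h2
    linear_combination -h2
  · intro h
    ext m
    cases m with
    | zero =>
      rw [coeff_zero_eq_constantCoeff]
      simp [h0]
    | succ n =>
      rw [coeff_L, coeff_R, h n]
      ring

lemma c_rec (n : ℕ) : c (n + 1) = (if n = 0 then 1 else 0)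
    + n * ∑ k ∈ Finset.range (n + 2), c k * c (n + 1 - k) := by
  cases n with
  | zero => simp [c]
  | succ m =>
    rw [if_neg (Nat.succ_ne_zero m), zero_add]
    show c (m + 2) = _
    rw [c, Finset.sum_attach (Finset.range (m + 1)) (fun j => c (j + 1) * c (m + 1 - j))]
    have e : ∑ k ∈ Finset.range (m + 3), c k * c (m + 2 - k)
        = ∑ j ∈ Finset.range (m + 1), c (j + 1) * c (m + 1 - j) := by
      rw [Finset.sum_range_succ']
      have h0 : c 0 = 0 := by simp [c]
      rw [h0, zero_mul, add_zero, Finset.sum_range_succ]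
      rw [show m + 2 - (m + 1 + 1) = 0 from by omega, h0, mul_zero, add_zero]
      apply Finset.sum_congr rfl
      intro k hk
      rw [show m + 2 - (k + 1) = m + 1 - k from by omega]
    show ((m : ℚ) + 1) * _ = ((m + 1 : ℕ) : ℚ) * ∑ k ∈ Finset.range (m + 3), c k * c (m + 2 - k)
    rw [e]
    push_cast
    ring

end Stmt2Aux

/-- There is a unique formal power series `C ∈ ℚ⟦x⟧` with `C(0) = 0`,
`[x¹]C = 1`, satisfying `2x C C' = C (1 + C) - x`. -/
theorem stmt_2 :
    ∃! C : PowerSeries ℚ,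
      constantCoeff C = 0 ∧ coeff 1 C = 1 ∧
        2 * X * C * (d⁄dX ℚ C) = C * (1 + C) - X := by
  refine ⟨PowerSeries.mk Stmt2Aux.c, ⟨?_, ?_, ?_⟩, ?_⟩
  · rw [← coeff_zero_eq_constantCoeff, coeff_mk]
    simp [Stmt2Aux.c]
  · rw [coeff_mk]
    simp [Stmt2Aux.c]
  · rw [Stmt2Aux.eq_iff]
    · intro n
      simp only [coeff_mk]
      exact Stmt2Aux.c_rec n
    · rw [← coeff_zero_eq_constantCoeff, coeff_mk]
      simp [Stmt2Aux.c]
  · rintro f ⟨h0, h1, heq⟩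
    have key : ∀ n, coeff n f = Stmt2Aux.c n := by
      intro n
      induction n using Nat.strong_induction_on with
      | _ n ih =>
        match n with
        | 0 =>
          rw [coeff_zero_eq_constantCoeff, h0]
          simp [Stmt2Aux.c]
        | (n + 1) =>
          rw [(Stmt2Aux.eq_iff f h0).mp heq n, Stmt2Aux.c_rec n]
          congr 1
          congr 1
          apply Finset.sum_congr rfl
          intro k hk
          rw [Finset.mem_range] at hk
          rcases Nat.eq_zero_or_pos k with rfl | hkpos
          · rw [← coeff_zero_eq_constantCoeff] at h0
            rw [h0, zero_mul]
            have : Stmt2Aux.c 0 = 0 := by simp [Stmt2Aux.c]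
            rw [this, zero_mul]
          · rcases eq_or_lt_of_le (by omega : k ≤ n + 1) with rfl | hlt
            · rw [Nat.sub_self, ← coeff_zero_eq_constantCoeff] at *
              rw [h0, mul_zero]
              have : Stmt2Aux.c 0 = 0 := by simp [Stmt2Aux.c]
              rw [this, mul_zero]
            · rw [ih k (by omega), ih (n + 1 - k) (by omega)]
    ext m
    rw [key, coeff_mk]
end

section
/- Let C be the connected chord diagram generating function and define the vertex Green function series U₁₁(x) by U₁₁(x)·C(x)³ = x²·(C(x) − x). Then U₁₁ is a well-defined formal power series with [x¹]U₁₁ = 1, [x²]U₁₁ = 1, [x³]U₁₁ = 9, [x⁴]U₁₁ = 100, [x⁵]U₁₁ = 1323. -/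
open PowerSeries

set_option maxHeartbeats 2000000 in
/-- The vertex Green function `U₁₁`, defined by `U₁₁ C³ = x² (C - x)`, is a
well-defined (unique) formal power series, with `[x¹]U₁₁ = 1`, `[x²]U₁₁ = 1`,
`[x³]U₁₁ = 9`, `[x⁴]U₁₁ = 100`, `[x⁵]U₁₁ = 1323`. -/
theorem stmt_12 (C : PowerSeries ℚ)
    (h0 : constantCoeff C = 0) (h1 : coeff 1 C = 1)
    (hode : 2 * X * C * (d⁄dX ℚ C) = C * (1 + C) - X) :
    (∃! U : PowerSeries ℚ, U * C ^ 3 = X ^ 2 * (C - X)) ∧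
      ∀ U : PowerSeries ℚ, U * C ^ 3 = X ^ 2 * (C - X) →
        coeff 1 U = 1 ∧ coeff 2 U = 1 ∧ coeff 3 U = 9 ∧
          coeff 4 U = 100 ∧ coeff 5 U = 1323 := by
  have h00 : coeff 0 C = 0 := by simpa using h0
  rw [show (2 : ℚ⟦X⟧) * X = X + X by ring] at hode
  have hc2 : coeff 2 C = 1 := by
    have h := congrArg (coeff 2) hode
    simp [coeff_mul, Finset.Nat.sum_antidiagonal_eq_sum_range_succ_mk,
      Finset.sum_range_succ, coeff_derivative, h0, h1, coeff_X, coeff_one, map_ofNat] at h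
    linarith
  have hc3 : coeff 3 C = 4 := by
    have h := congrArg (coeff 3) hode
    simp [coeff_mul, Finset.Nat.sum_antidiagonal_eq_sum_range_succ_mk,
      Finset.sum_range_succ, coeff_derivative, h0, h1, hc2, coeff_X, coeff_one, map_ofNat] at h
    linarith
  have hc4 : coeff 4 C = 27 := by
    have h := congrArg (coeff 4) hode
    simp [coeff_mul, Finset.Nat.sum_antidiagonal_eq_sum_range_succ_mk,
      Finset.sum_range_succ, coeff_derivative, h0, h1, hc2, hc3, coeff_X, coeff_one, map_ofNat] at h
    linarith
  have hc5 : coeff 5 C = 248 := by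
    have h := congrArg (coeff 5) hode
    simp [coeff_mul, Finset.Nat.sum_antidiagonal_eq_sum_range_succ_mk,
      Finset.sum_range_succ, coeff_derivative, h0, h1, hc2, hc3, hc4, coeff_X, coeff_one,
      map_ofNat] at h
    linarith
  have hc6 : coeff 6 C = 2830 := by
    have h := congrArg (coeff 6) hode
    simp [coeff_mul, Finset.Nat.sum_antidiagonal_eq_sum_range_succ_mk,
      Finset.sum_range_succ, coeff_derivative, h0, h1, hc2, hc3, hc4, hc5, coeff_X, coeff_one,
      map_ofNat] at h
    linarith
  -- coefficients of C ^ 3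
  have hC3 : C ^ 3 = C * C * C := by ring
  have hd : ∀ k : ℕ, k ≤ 8 →
      coeff k (C ^ 3) = [0, 0, 0, 1, 3, 15, 106, 966, 10755].getD k 0 := by
    intro k hk
    rw [hC3]
    interval_cases k <;>
      simp [coeff_mul, Finset.Nat.sum_antidiagonal_eq_sum_range_succ_mk,
        Finset.sum_range_succ, h00, h1, hc2, hc3, hc4, hc5, hc6] <;> norm_num
  have hd0 := hd 0 (by norm_num); have hd1 := hd 1 (by norm_num)
  have hd2 := hd 2 (by norm_num); have hd3 := hd 3 (by norm_num)
  have hd4 := hd 4 (by norm_num); have hd5 := hd 5 (by norm_num)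
  have hd6 := hd 6 (by norm_num); have hd7 := hd 7 (by norm_num)
  have hd8 := hd 8 (by norm_num)
  simp only [List.getD_cons_succ, List.getD_cons_zero] at hd0 hd1 hd2 hd3 hd4 hd5 hd6 hd7 hd8
  -- existence
  obtain ⟨V, hV⟩ : (X : ℚ⟦X⟧) ∣ C := X_dvd_iff.mpr h0
  obtain ⟨W, hW⟩ : (X : ℚ⟦X⟧) ∣ (C - X) := X_dvd_iff.mpr (by simp [h0])
  have hVc : constantCoeff V = 1 := by
    have := h1
    rw [hV] at this
    simpa [coeff_succ_X_mul] using this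
  have hVinv : V * V⁻¹ = 1 := PowerSeries.mul_inv_cancel V (by rw [hVc]; norm_num)
  have hex : (W * (V⁻¹) ^ 3) * C ^ 3 = X ^ 2 * (C - X) := by
    rw [hW, hV, mul_pow]
    calc W * V⁻¹ ^ 3 * (X ^ 3 * V ^ 3) = X ^ 3 * W * (V * V⁻¹) ^ 3 := by ring
    _ = X ^ 2 * (X * W) := by rw [hVinv]; ring
  have hC3ne : C ^ 3 ≠ 0 := pow_ne_zero _ (fun h => by simp [h] at h1)
  have huniq : ∀ U : ℚ⟦X⟧, U * C ^ 3 = X ^ 2 * (C - X) → U = W * (V⁻¹) ^ 3 := by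
    intro U hU
    exact mul_right_cancel₀ hC3ne (hU.trans hex.symm)
  refine ⟨⟨W * (V⁻¹) ^ 3, hex, huniq⟩, ?_⟩
  intro U hU
  have e3 := congrArg (coeff 3) hU
  have e4 := congrArg (coeff 4) hU
  have e5 := congrArg (coeff 5) hU
  have e6 := congrArg (coeff 6) hU
  have e7 := congrArg (coeff 7) hU
  have e8 := congrArg (coeff 8) hU
  simp [coeff_mul, Finset.Nat.sum_antidiagonal_eq_sum_range_succ_mk,
    Finset.sum_range_succ, hd0, hd1, hd2, hd3, hd4, hd5, hd6, hd7, hd8,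
    coeff_X, coeff_X_pow, h00, h1, hc2, hc3, hc4, hc5, hc6] at e3 e4 e5 e6 e7 e8
  refine ⟨by linarith, by linarith, by linarith, by linarith, by linarith⟩
end

section
/- Let D(x) = Σ_{n≥0}(2n−1)!! xⁿ and let C(x) be the unique formal power series with C(0)=0, [x¹]C=1 satisfying 2xCC' = C(1+C) − x. Then D(x) = 1 + C(x·D(x)²), where the right-hand side is composition of formal power series (x·D(x)² has zero constant term, so the composition is well defined). -/
open PowerSeries Nat

/-- Composition `f ∘ g` of formal power series, valid when `g` has zero
constant term: the `n`-th coefficient only depends on the first `n + 1`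
partial sums `Σ_{k ≤ n} f_k gᵏ`. -/
noncomputable def psComp (f g : PowerSeries ℚ) : PowerSeries ℚ :=
  PowerSeries.mk fun n =>
    coeff n (∑ k ∈ Finset.range (n + 1), PowerSeries.C (coeff k f) * g ^ k)

section CompAPI

variable {ψ : PowerSeries ℚ}

lemma coeff_pow_eq_zero' (hψ : constantCoeff ψ = 0) {n k : ℕ} (h : n < k) :
    coeff n (ψ ^ k) = 0 := by
  have hdvd : (X : PowerSeries ℚ) ^ k ∣ ψ ^ k :=
    pow_dvd_pow_of_dvd (PowerSeries.X_dvd_iff.mpr hψ) k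
  exact (PowerSeries.X_pow_dvd_iff.mp hdvd) n h

lemma coeff_aeval' (hψ : constantCoeff ψ = 0) (P : Polynomial ℚ) (n : ℕ) :
    coeff n (Polynomial.aeval ψ P) =
      ∑ i ∈ Finset.range (n + 1), P.coeff i * coeff n (ψ ^ i) := by
  rw [Polynomial.aeval_def, Polynomial.eval₂_eq_sum_range, map_sum]
  have hterm : ∀ i, coeff n (algebraMap ℚ (PowerSeries ℚ) (P.coeff i) * ψ ^ i)
      = P.coeff i * coeff n (ψ ^ i) := by
    intro i
    rw [← Algebra.smul_def, map_smul, smul_eq_mul]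
  simp_rw [hterm]
  set g : ℕ → ℚ := fun i => P.coeff i * coeff n (ψ ^ i) with hg
  set N := max (P.natDegree + 1) (n + 1) with hN
  have h1 : ∑ i ∈ Finset.range (P.natDegree + 1), g i = ∑ i ∈ Finset.range N, g i := by
    apply Finset.sum_subset (Finset.range_subset_range.mpr (le_max_left _ _))
    intro i _ hi
    rw [Finset.mem_range, not_lt] at hi
    have : P.coeff i = 0 := Polynomial.coeff_eq_zero_of_natDegree_lt (by omega)
    simp [hg, this]
  have h2 : ∑ i ∈ Finset.range (n + 1), g i = ∑ i ∈ Finset.range N, g i := by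
    apply Finset.sum_subset (Finset.range_subset_range.mpr (le_max_right _ _))
    intro i _ hi
    rw [Finset.mem_range, not_lt] at hi
    have : coeff n (ψ ^ i) = 0 := coeff_pow_eq_zero' hψ (by omega)
    simp [hg, this]
  rw [h1, h2]

lemma coeff_psComp' (f : PowerSeries ℚ) (n : ℕ) :
    coeff n (psComp f ψ) = ∑ i ∈ Finset.range (n + 1), coeff i f * coeff n (ψ ^ i) := by
  rw [psComp, coeff_mk, map_sum]
  exact Finset.sum_congr rfl fun i _ => coeff_C_mul _ _ _

lemma coeff_psComp_eq_aeval (hψ : constantCoeff ψ = 0) (f : PowerSeries ℚ) {n N : ℕ}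
    (h : n < N) :
    coeff n (psComp f ψ) = coeff n (Polynomial.aeval ψ (trunc N f)) := by
  rw [coeff_psComp', coeff_aeval' hψ]
  refine Finset.sum_congr rfl fun i hi => ?_
  rw [Finset.mem_range] at hi
  rw [coeff_trunc, if_pos (by omega)]

lemma coeff_mul_congr {A A' B B' : PowerSeries ℚ} {n : ℕ}
    (hA : ∀ i ≤ n, coeff i A = coeff i A')
    (hB : ∀ i ≤ n, coeff i B = coeff i B') :
    coeff n (A * B) = coeff n (A' * B') := by
  rw [coeff_mul, coeff_mul]
  refine Finset.sum_congr rfl fun p hp => ?_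
  rw [hA p.1 (Finset.HasAntidiagonal.antidiagonal.fst_le hp), hB p.2 (Finset.HasAntidiagonal.antidiagonal.snd_le hp)]

lemma psComp_zero : psComp 0 ψ = 0 := by
  ext n
  rw [coeff_psComp']
  simp

lemma psComp_add (f g : PowerSeries ℚ) : psComp (f + g) ψ = psComp f ψ + psComp g ψ := by
  ext n
  rw [map_add, coeff_psComp', coeff_psComp', coeff_psComp', ← Finset.sum_add_distrib]
  refine Finset.sum_congr rfl fun i _ => ?_
  rw [map_add]
  ring

lemma psComp_one : psComp 1 ψ = 1 := by
  ext n
  rw [coeff_psComp', Finset.sum_eq_single 0]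
  · simp
  · intro i _ hi
    simp [coeff_one, hi]
  · simp

lemma psComp_X (hψ : constantCoeff ψ = 0) : psComp X ψ = ψ := by
  ext n
  rw [coeff_psComp', Finset.sum_eq_single 1]
  · simp
  · intro i _ hi
    simp [coeff_X, hi]
  · intro h
    rw [Finset.mem_range, not_lt] at h
    have hn : n = 0 := by omega
    subst hn
    simp [coeff_X, coeff_zero_eq_constantCoeff, hψ]

lemma psComp_mul (hψ : constantCoeff ψ = 0) (f g : PowerSeries ℚ) :
    psComp (f * g) ψ = psComp f ψ * psComp g ψ := by
  ext n
  rw [coeff_psComp_eq_aeval hψ (f * g) (Nat.lt_succ_self n)]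
  have h1 : coeff n (psComp f ψ * psComp g ψ)
      = coeff n ((Polynomial.aeval ψ (trunc (n + 1) f)) * (Polynomial.aeval ψ (trunc (n + 1) g))) :=
    coeff_mul_congr
      (fun i hi => coeff_psComp_eq_aeval hψ f (Nat.lt_succ_of_le hi))
      (fun i hi => coeff_psComp_eq_aeval hψ g (Nat.lt_succ_of_le hi))
  rw [h1, ← map_mul, coeff_aeval' hψ, coeff_aeval' hψ]
  refine Finset.sum_congr rfl fun i hi => ?_
  rw [Finset.mem_range] at hi
  congr 1
  have key := trunc_trunc_mul_trunc (n := n + 1) f g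
  have h2 : (trunc (n + 1) (f * g)).coeff i
      = (trunc (n + 1) ((trunc (n + 1) f : PowerSeries ℚ) * (trunc (n + 1) g) : PowerSeries ℚ)).coeff i := by
    rw [key]
  rw [h2, coeff_trunc, if_pos (by omega), ← Polynomial.coe_mul, Polynomial.coeff_coe]

/-- Composition with `ψ` as a ring homomorphism. -/
noncomputable def compHom (ψ : PowerSeries ℚ) (hψ : constantCoeff ψ = 0) :
    PowerSeries ℚ →+* PowerSeries ℚ where
  toFun f := psComp f ψ
  map_one' := psComp_one
  map_mul' := psComp_mul hψ
  map_zero' := psComp_zero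
  map_add' := psComp_add

lemma compHom_apply (ψ : PowerSeries ℚ) (hψ : constantCoeff ψ = 0) (f : PowerSeries ℚ) :
    compHom ψ hψ f = psComp f ψ := rfl

/-- Chain rule for `psComp`. -/
lemma psComp_derivative (hψ : constantCoeff ψ = 0) (f : PowerSeries ℚ) :
    d⁄dX ℚ (psComp f ψ) = psComp (d⁄dX ℚ f) ψ * d⁄dX ℚ ψ := by
  ext n
  rw [coeff_derivative, coeff_psComp_eq_aeval hψ f (Nat.lt_succ_self (n + 1)),
    ← coeff_derivative, Derivation.map_aeval, smul_eq_mul]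
  have h1 : coeff n (psComp (d⁄dX ℚ f) ψ * d⁄dX ℚ ψ)
      = coeff n ((Polynomial.aeval ψ (Polynomial.derivative (trunc (n + 2) f))) * d⁄dX ℚ ψ) := by
    apply coeff_mul_congr
    · intro i hi
      rw [coeff_psComp_eq_aeval hψ _ (Nat.lt_succ_of_le hi), trunc_derivative]
    · intro i _
      rfl
  rw [h1]

end CompAPI

/-- Uniqueness part: two solutions of the transported ODE with zero constant
coefficient coincide. -/
lemma psODE_unique (u G H : PowerSeries ℚ)
    (hu0 : constantCoeff u = 1)
    (hG0 : constantCoeff G = 0) (hH0 : constantCoeff H = 0)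
    (heq : (X * u) * d⁄dX ℚ ((G + H) * (G - H))
      = (1 + G + H) * (G - H) * d⁄dX ℚ (X * u)) :
    G = H := by
  have hX : (X : PowerSeries ℚ) ≠ 0 := X_ne_zero
  have hdXu : d⁄dX ℚ (X * u) = X * d⁄dX ℚ u + u := by
    rw [Derivation.leibniz, smul_eq_mul, smul_eq_mul, derivative_X]
    ring
  have hd0 : constantCoeff (d⁄dX ℚ (X * u)) = 1 := by
    rw [hdXu]
    simp [hu0]
  have hK : ∀ n, coeff n (G - H) = 0 := by
    intro n
    induction n using Nat.strong_induction_on with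
    | _ n ih =>
      match n with
      | 0 =>
        simp only [map_sub, coeff_zero_eq_constantCoeff, hG0, hH0, sub_zero]
      | (m + 1) =>
        have hdvd : (X : PowerSeries ℚ) ^ (m + 1) ∣ (G - H) :=
          PowerSeries.X_pow_dvd_iff.mpr fun j hj => ih j hj
        obtain ⟨L, hL⟩ := hdvd
        have hcoeff : coeff (m + 1) (G - H) = constantCoeff L := by
          rw [hL]
          have := coeff_X_pow_mul L (m + 1) 0
          simpa using this
        rw [hcoeff]
        set M := (G + H) * L with hM
        have hGHK : (G + H) * (G - H) = X ^ (m + 1) * M := by rw [hL]; ring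
        have hdXpow : d⁄dX ℚ ((X : PowerSeries ℚ) ^ (m + 1))
            = ((m + 1 : ℕ) : PowerSeries ℚ) * X ^ m := by
          rw [Derivation.leibniz_pow, derivative_X]
          simp [nsmul_eq_mul]
        have hdM : d⁄dX ℚ ((X : PowerSeries ℚ) ^ (m + 1) * M)
            = X ^ (m + 1) * d⁄dX ℚ M + ((m + 1 : ℕ) : PowerSeries ℚ) * X ^ m * M := by
          rw [Derivation.leibniz, smul_eq_mul, smul_eq_mul, hdXpow]
          ring
        have key : (X : PowerSeries ℚ) ^ (m + 1)
              * (u * (X * d⁄dX ℚ M + ((m + 1 : ℕ) : PowerSeries ℚ) * M))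
            = X ^ (m + 1) * ((1 + G + H) * L * d⁄dX ℚ (X * u)) := by
          have h := heq
          rw [hGHK, hdM] at h
          calc (X : PowerSeries ℚ) ^ (m + 1)
                * (u * (X * d⁄dX ℚ M + ((m + 1 : ℕ) : PowerSeries ℚ) * M))
              = (X * u) * (X ^ (m + 1) * d⁄dX ℚ M
                  + ((m + 1 : ℕ) : PowerSeries ℚ) * X ^ m * M) := by ring
            _ = (1 + G + H) * (G - H) * d⁄dX ℚ (X * u) := h
            _ = X ^ (m + 1) * ((1 + G + H) * L * d⁄dX ℚ (X * u)) := by rw [hL]; ring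
        have hcancel : u * (X * d⁄dX ℚ M + ((m + 1 : ℕ) : PowerSeries ℚ) * M)
            = (1 + G + H) * L * d⁄dX ℚ (X * u) :=
          mul_left_cancel₀ (pow_ne_zero _ hX) key
        have hconst := congrArg (constantCoeff) hcancel
        have hM0 : constantCoeff M = 0 := by
          rw [hM, map_mul, map_add, hG0, hH0]
          ring
        simp only [map_mul, map_add, map_one, constantCoeff_X, hu0, hG0, hH0, hM0, hd0,
          zero_mul, mul_zero, add_zero, zero_add, one_mul, mul_one] at hconst
        exact hconst.symm
  have : G - H = 0 := by
    ext n
    simpa using hK n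
  exact sub_eq_zero.mp this

/-- `D(x) = 1 + C(x D(x)²)`: the root-component decomposition of chord
diagrams, where `D` counts all rooted chord diagrams and `C` the connected
ones. -/
theorem stmt_13 (C : PowerSeries ℚ)
    (h0 : constantCoeff C = 0) (h1 : coeff 1 C = 1)
    (hode : 2 * X * C * (d⁄dX ℚ C) = C * (1 + C) - X) :
    let D : PowerSeries ℚ := PowerSeries.mk fun n => ((2 * n - 1)‼ : ℚ)
    D = 1 + psComp C (X * D ^ 2) := by
  intro D
  have hDdef : D = PowerSeries.mk fun n => ((2 * n - 1)‼ : ℚ) := rfl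
  have hDcoeff : ∀ n, coeff n D = ((2 * n - 1)‼ : ℚ) := by
    intro n; rw [hDdef, coeff_mk]
  have hD0 : constantCoeff D = 1 := by
    rw [← coeff_zero_eq_constantCoeff, hDcoeff]
    norm_num
  -- The ODE satisfied by D
  have hODE : D = 1 + X * D + 2 * X ^ 2 * d⁄dX ℚ D := by
    ext n
    rw [map_add, map_add, coeff_one]
    have hrw : (2 : PowerSeries ℚ) * X ^ 2 * d⁄dX ℚ D = X ^ 2 * (2 * d⁄dX ℚ D) := by ring
    rw [hrw]
    match n with
    | 0 =>
      simp [hDcoeff, coeff_zero_eq_constantCoeff]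
    | 1 =>
      rw [coeff_succ_X_mul, hDcoeff, hDcoeff]
      have h2 : coeff 1 ((X : PowerSeries ℚ) ^ 2 * (2 * d⁄dX ℚ D)) = 0 := by
        have hdvd : (X : PowerSeries ℚ) ^ 2 ∣ X ^ 2 * (2 * d⁄dX ℚ D) := ⟨_, rfl⟩
        exact (PowerSeries.X_pow_dvd_iff.mp hdvd) 1 (by norm_num)
      rw [h2]
      norm_num
    | (n + 2) =>
      rw [coeff_succ_X_mul]
      have h3 : coeff (n + 2) ((X : PowerSeries ℚ) ^ 2 * (2 * d⁄dX ℚ D))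
          = coeff n (2 * d⁄dX ℚ D) := coeff_X_pow_mul _ 2 n
      rw [h3, hDcoeff, hDcoeff]
      have h4 : coeff n (2 * d⁄dX ℚ D) = 2 * (coeff (n + 1) D * ((n : ℚ) + 1)) := by
        have h2C : (2 : PowerSeries ℚ) = PowerSeries.C (2 : ℚ) :=
          (map_ofNat (PowerSeries.C) 2).symm
        rw [h2C, coeff_C_mul, coeff_derivative]
      rw [h4, hDcoeff]
      have e1 : 2 * (n + 2) - 1 = (2 * n + 1) + 2 := by omega
      have e2 : 2 * (n + 1) - 1 = 2 * n + 1 := by omega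
      rw [e1, e2, Nat.doubleFactorial_add_two]
      push_cast
      ring
  -- Setup
  have hψ0 : constantCoeff (X * D ^ 2) = 0 := by simp
  set G := psComp C (X * D ^ 2) with hG
  -- ODE transported to G
  have hcomp := congrArg (compHom (X * D ^ 2) hψ0) hode
  simp only [map_mul, map_sub, map_add, map_one, map_ofNat, compHom_apply,
    psComp_X hψ0] at hcomp
  rw [← hG] at hcomp
  -- hcomp : 2 * (X*D^2) * G * psComp (d⁄dX ℚ C) (X*D^2) = G * (1 + G) - X*D^2
  have eqG : 2 * (X * D ^ 2) * G * d⁄dX ℚ G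
      = (G * (1 + G) - X * D ^ 2) * d⁄dX ℚ (X * D ^ 2) := by
    rw [hG, psComp_derivative hψ0, ← hG]
    calc 2 * (X * D ^ 2) * G * (psComp (d⁄dX ℚ C) (X * D ^ 2) * d⁄dX ℚ (X * D ^ 2))
        = (2 * (X * D ^ 2) * G * psComp (d⁄dX ℚ C) (X * D ^ 2)) * d⁄dX ℚ (X * D ^ 2) := by
          ring
      _ = (G * (1 + G) - X * D ^ 2) * d⁄dX ℚ (X * D ^ 2) := by rw [hcomp]
  set H := D - 1 with hH
  have hdψ : d⁄dX ℚ (X * D ^ 2) = D ^ 2 + 2 * X * D * d⁄dX ℚ D := by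
    rw [Derivation.leibniz, Derivation.leibniz_pow, derivative_X]
    simp [smul_eq_mul]
    ring
  have hdH : d⁄dX ℚ H = d⁄dX ℚ D := by
    rw [hH, map_sub]
    simp
  have eqH : 2 * (X * D ^ 2) * H * d⁄dX ℚ H
      = (H * (1 + H) - X * D ^ 2) * d⁄dX ℚ (X * D ^ 2) := by
    rw [hdψ, hdH, hH]
    linear_combination (-(D ^ 3)) * hODE
  -- constant coefficients
  have hG0 : constantCoeff G = 0 := by
    rw [hG, ← coeff_zero_eq_constantCoeff, coeff_psComp']
    simp [coeff_zero_eq_constantCoeff, h0]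
  have hH0 : constantCoeff H = 0 := by
    rw [hH, map_sub, hD0, map_one, sub_self]
  -- combine to the symmetric equation and apply uniqueness
  have hu0 : constantCoeff (D ^ 2) = 1 := by
    rw [map_pow, hD0, one_pow]
  have dGG : d⁄dX ℚ (G * G) = 2 * G * d⁄dX ℚ G := by
    rw [Derivation.leibniz]
    simp only [smul_eq_mul]
    ring
  have dHH : d⁄dX ℚ (H * H) = 2 * H * d⁄dX ℚ H := by
    rw [Derivation.leibniz]
    simp only [smul_eq_mul]
    ring
  have heq : (X * D ^ 2) * d⁄dX ℚ ((G + H) * (G - H))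
      = (1 + G + H) * (G - H) * d⁄dX ℚ (X * D ^ 2) := by
    have e : (G + H) * (G - H) = G * G - H * H := by ring
    rw [e, map_sub, dGG, dHH]
    linear_combination eqG - eqH
  have hGH : G = H := psODE_unique (D ^ 2) G H hu0 hG0 hH0 heq
  rw [hGH, hH]
  ring
end
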